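/- Suppose d(x,y) = log sup_{α ∈ S} (i(y,α)/i(x,α)) for a family of positive functions i(x,·) : S → ℝ_{>0} indexed by x ∈ X, and suppose ψ_ξ(x) = log( sup_{α} i(ξ,α)/i(x,α) ) - log( sup_{α} i(ξ,α)/i(b,α) ) for some function i(ξ,·) : S → ℝ_{≥0}. If a sequence (x_n) in X admits for each n an element α_n ∈ S with d(x_n, b) ≤ log(i(b,α_n)/i(x_n,α_n)) + ε and i(ξ,α_n)/i(b,α_n) ≥ C' > 0 for all n, then there is a constant C > 0 independent of n such that d(x_n, b) ≥ ψ_ξ(x_n) ≥ d(x_n, b) - C for all n. -/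

import Mathlib

/-- Comparison of the distance and a horofunction when both are given by ratios.
`d x y = log sup_α i(y,α)/i(x,α)` and
`ψ x = log(sup_α iξ(α)/i(x,α)) - log(sup_α iξ(α)/i(b,α))`.
If along a sequence `x n` there are `α n` almost realizing the distance to the base
point while `iξ (α n) / i b (α n) ≥ C' > 0`, then `d (x n) b ≥ ψ (x n) ≥ d (x n) b - C`
for a constant `C > 0` independent of `n`. -/
theorem horofunction_compare_dist {X S : Type*} [Nonempty S]
    (d : X → X → ℝ) (i : X → S → ℝ) (iξ : S → ℝ) (b : X) (ψ : X → ℝ)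
    (hpos : ∀ (x : X) (α : S), 0 < i x α)
    (hinf : ∀ x : X, ∃ c > 0, ∀ α : S, c ≤ i x α)
    (hiξ : ∀ α : S, 0 ≤ iξ α)
    (hbdd : ∀ x y : X, BddAbove (Set.range fun α : S => i y α / i x α))
    (hbddξ : ∀ x : X, BddAbove (Set.range fun α : S => iξ α / i x α))
    (hdist : ∀ x y : X, d x y = Real.log (⨆ α : S, i y α / i x α))
    (hhoro : ∀ x : X, ψ x =
      Real.log (⨆ α : S, iξ α / i x α) - Real.log (⨆ α : S, iξ α / i b α))
    (x : ℕ → X) (α : ℕ → S) (ε C' : ℝ) (hε : 0 < ε) (hC' : 0 < C')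
    (hα : ∀ n, d (x n) b ≤ Real.log (i b (α n) / i (x n) (α n)) + ε)
    (hlow : ∀ n, C' ≤ iξ (α n) / i b (α n)) :
    ∃ C > 0, ∀ n, ψ (x n) ≤ d (x n) b ∧ d (x n) b - C ≤ ψ (x n) := by
  have hC'A : C' ≤ ⨆ β : S, iξ β / i b β :=
    le_trans (hlow 0) (le_ciSup (hbddξ b) (α 0))
  have hA : 0 < ⨆ β : S, iξ β / i b β := lt_of_lt_of_le hC' hC'A
  have h0 : 0 < iξ (α 0) :=
    lt_of_lt_of_le (mul_pos hC' (hpos b (α 0)))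
      ((le_div_iff₀ (hpos b (α 0))).mp (hlow 0))
  have hsupξ : ∀ y : X, 0 < ⨆ β : S, iξ β / i y β := fun y =>
    lt_of_lt_of_le (div_pos h0 (hpos y (α 0))) (le_ciSup (hbddξ y) (α 0))
  have hlogC'A : Real.log C' ≤ Real.log (⨆ β : S, iξ β / i b β) :=
    Real.log_le_log hC' hC'A
  refine ⟨ε + (Real.log (⨆ β : S, iξ β / i b β) - Real.log C'), by linarith, fun n => ?_⟩
  have hsupb : 0 < ⨆ β : S, i b β / i (x n) β :=
    lt_of_lt_of_le (div_pos (hpos b (α n)) (hpos (x n) (α n)))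
      (le_ciSup (hbdd (x n) b) (α n))
  constructor
  · -- upper bound
    have key : (⨆ β : S, iξ β / i (x n) β) ≤
        (⨆ β : S, iξ β / i b β) * ⨆ β : S, i b β / i (x n) β := by
      refine ciSup_le fun β => ?_
      have heq : iξ β / i (x n) β = (iξ β / i b β) * (i b β / i (x n) β) := by
        field_simp
        rw [mul_comm (iξ β) (i b β), mul_comm (i (x n) β) (i b β), mul_div_mul_left _ _ (ne_of_gt (hpos b β))]
      rw [heq]
      exact mul_le_mul (le_ciSup (hbddξ b) β) (le_ciSup (hbdd (x n) b) β)
        (le_of_lt (div_pos (hpos b β) (hpos (x n) β))) (le_of_lt hA)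
    have := Real.log_le_log (hsupξ (x n)) key
    rw [Real.log_mul (ne_of_gt hA) (ne_of_gt hsupb)] at this
    rw [hhoro, hdist]
    linarith
  · -- lower bound
    have hr : 0 < i b (α n) / i (x n) (α n) := div_pos (hpos b (α n)) (hpos (x n) (α n))
    have key : C' * (i b (α n) / i (x n) (α n)) ≤ ⨆ β : S, iξ β / i (x n) β := by
      refine le_trans ?_ (le_ciSup (hbddξ (x n)) (α n))
      have heq : iξ (α n) / i (x n) (α n) =
          (iξ (α n) / i b (α n)) * (i b (α n) / i (x n) (α n)) := by
        field_simp
        rw [mul_comm (iξ (α n)) (i b (α n)), mul_comm (i (x n) (α n)) (i b (α n)),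
          mul_div_mul_left _ _ (ne_of_gt (hpos b (α n)))]
      rw [heq]
      exact mul_le_mul_of_nonneg_right (hlow n) (le_of_lt hr)
    have hlog := Real.log_le_log (mul_pos hC' hr) key
    rw [Real.log_mul (ne_of_gt hC') (ne_of_gt hr)] at hlog
    have hαn := hα n
    rw [hhoro, hdist]
    rw [hdist] at hαn
    linarith
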